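/- Let n ≥ 3, let k₁, k₂ ≥ 2, let λ₁, λ₂ be primitive k₁-th and k₂-th roots of unity, and let a_{1j} (2 ≤ j ≤ n) and a_{2j} (j = 1 or 3 ≤ j ≤ n) be complex numbers. Define the transversal pair of linear reflections β₁(x) = (λ₁x₁, x₂ + a_{12}x₁, x₃ + a_{13}x₁, …, xₙ + a_{1n}x₁) and β₂(x) = (x₁ + a_{21}x₂, λ₂x₂, x₃ + a_{23}x₂, …, xₙ + a_{2n}x₂). Assume β₁ and β₂ do not commute (equivalently (a_{12}, a_{21}) ≠ (0,0)) and that a_{12}a_{21} = (λ₁ − 1)(λ₂ − 1). Then: if (a_{23}, …, a_{2n}) = (a_{21}/(λ₁ − 1))·(a_{13}, …, a_{1n}), the pair (β₁, β₂) is equivalent to (γ₁, γ₂) with γ₁(x) = (λ₁x₁, (λ₁ − 1)(λ₂ − 1)x₁ + x₂, x₃, …, xₙ) and γ₂(x) = (x₁ + x₂, λ₂x₂, x₃, …, xₙ); and if (a_{23}, …, a_{2n}) ≠ (a_{21}/(λ₁ − 1))·(a_{13}, …, a_{1n}), the pair (β₁, β₂) is equivalent to (γ₁, γ₂) with γ₁(x)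 = (λ₁x₁, (λ₁ − 1)(λ₂ − 1)x₁ + x₂, x₃, …, xₙ) and γ₂(x) = (x₁ + x₂, λ₂x₂, x₂ + x₃, x₄, …, xₙ). -/

import Mathlib

set_option maxHeartbeats 1000000


noncomputable section

open Filter Function

/-- ℂⁿ as the space of functions `Fin n → ℂ`. -/
abbrev Cn (n : ℕ) : Type := Fin n → ℂ

private lemma exists_conj {n : ℕ} (β₁ β₂ γ₁ γ₂ : Cn n → Cn n)
    (g : Cn n →ₗ[ℂ] Cn n) (hg : Function.Injective g)
    (h1 : ∀ x, β₁ (g x) = g (γ₁ x)) (h2 : ∀ x, β₂ (g x) = g (γ₂ x)) :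
    ∃ h : Cn n ≃ₗ[ℂ] Cn n,
      (∀ x, h (β₁ (h.symm x)) = γ₁ x) ∧ (∀ x, h (β₂ (h.symm x)) = γ₂ x) := by
  have hsurj : Function.Surjective g := (LinearMap.injective_iff_surjective).mp hg
  let e := LinearEquiv.ofBijective g ⟨hg, hsurj⟩
  have he : ∀ y, e y = g y := fun y => rfl
  refine ⟨e.symm, fun x => ?_, fun x => ?_⟩
  · show e.symm (β₁ (e.symm.symm x)) = γ₁ x
    rw [LinearEquiv.symm_symm]
    rw [show β₁ (e x) = e (γ₁ x) from by rw [he, he]; exact h1 x]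
    exact e.symm_apply_apply _
  · show e.symm (β₂ (e.symm.symm x)) = γ₂ x
    rw [LinearEquiv.symm_symm]
    rw [show β₂ (e x) = e (γ₂ x) from by rw [he, he]; exact h2 x]
    exact e.symm_apply_apply _

theorem stmt_18 (n : ℕ) (hn : 3 ≤ n) (k₁ k₂ : ℕ) (hk₁ : 2 ≤ k₁) (hk₂ : 2 ≤ k₂)
    (lam₁ lam₂ : ℂ) (hl₁ : IsPrimitiveRoot lam₁ k₁) (hl₂ : IsPrimitiveRoot lam₂ k₂)
    (a₁ a₂ : Fin n → ℂ)
    (β₁ β₂ : Cn n → Cn n)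
    (hβ₁ : β₁ = fun x : Cn n => fun j : Fin n =>
      if j = (⟨0, by omega⟩ : Fin n) then lam₁ * x ⟨0, by omega⟩
      else x j + a₁ j * x ⟨0, by omega⟩)
    (hβ₂ : β₂ = fun x : Cn n => fun j : Fin n =>
      if j = (⟨1, by omega⟩ : Fin n) then lam₂ * x ⟨1, by omega⟩
      else x j + a₂ j * x ⟨1, by omega⟩)
    (hnc : β₁ ∘ β₂ ≠ β₂ ∘ β₁)
    (heq : a₁ ⟨1, by omega⟩ * a₂ ⟨0, by omega⟩ = (lam₁ - 1) * (lam₂ - 1)) :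
    ((∀ j : Fin n, 2 ≤ (j : ℕ) → a₂ j = a₂ ⟨0, by omega⟩ / (lam₁ - 1) * a₁ j) →
      ∃ h : Cn n ≃ₗ[ℂ] Cn n,
        (∀ x : Cn n, h (β₁ (h.symm x)) = fun j : Fin n =>
          if j = (⟨0, by omega⟩ : Fin n) then lam₁ * x ⟨0, by omega⟩
          else if j = (⟨1, by omega⟩ : Fin n) then
            (lam₁ - 1) * (lam₂ - 1) * x ⟨0, by omega⟩ + x ⟨1, by omega⟩
          else x j) ∧
        (∀ x : Cn n, h (β₂ (h.symm x)) = fun j : Fin n =>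
          if j = (⟨0, by omega⟩ : Fin n) then x ⟨0, by omega⟩ + x ⟨1, by omega⟩
          else if j = (⟨1, by omega⟩ : Fin n) then lam₂ * x ⟨1, by omega⟩
          else x j)) ∧
    (¬ (∀ j : Fin n, 2 ≤ (j : ℕ) → a₂ j = a₂ ⟨0, by omega⟩ / (lam₁ - 1) * a₁ j) →
      ∃ h : Cn n ≃ₗ[ℂ] Cn n,
        (∀ x : Cn n, h (β₁ (h.symm x)) = fun j : Fin n =>
          if j = (⟨0, by omega⟩ : Fin n) then lam₁ * x ⟨0, by omega⟩
          else if j = (⟨1, by omega⟩ : Fin n) then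
            (lam₁ - 1) * (lam₂ - 1) * x ⟨0, by omega⟩ + x ⟨1, by omega⟩
          else x j) ∧
        (∀ x : Cn n, h (β₂ (h.symm x)) = fun j : Fin n =>
          if j = (⟨0, by omega⟩ : Fin n) then x ⟨0, by omega⟩ + x ⟨1, by omega⟩
          else if j = (⟨1, by omega⟩ : Fin n) then lam₂ * x ⟨1, by omega⟩
          else if j = (⟨2, by omega⟩ : Fin n) then x ⟨1, by omega⟩ + x ⟨2, by omega⟩
          else x j)) := by
  have hl1 : lam₁ - 1 ≠ 0 := sub_ne_zero.mpr (hl₁.ne_one hk₁)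
  have hl2 : lam₂ - 1 ≠ 0 := sub_ne_zero.mpr (hl₂.ne_one hk₂)
  set i0 : Fin n := ⟨0, by omega⟩ with hi0
  set i1 : Fin n := ⟨1, by omega⟩ with hi1
  set i2 : Fin n := ⟨2, by omega⟩ with hi2
  set c : ℂ := (lam₁ - 1) * (lam₂ - 1) with hcdef
  have hc : c ≠ 0 := mul_ne_zero hl1 hl2
  set A : ℂ := a₁ i1 with hAdef
  have hA : A ≠ 0 := by
    intro h
    rw [hAdef.trans h, zero_mul] at heq
    exact hc heq.symm
  constructor
  · -- case 1
    intro hcase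
    -- the linear map g
    set G : Cn n → Cn n := fun x j =>
      if (j : ℕ) = 0 then x i0
      else if (j : ℕ) = 1 then A / c * x i1
      else x j + a₁ j / c * x i1 with hG
    have Glin : IsLinearMap ℂ G := by
      constructor
      · intro x y; funext j
        by_cases h0 : (j : ℕ) = 0 <;> by_cases h1 : (j : ℕ) = 1 <;>
          simp [hG, h0, h1] <;> ring
      · intro t x; funext j
        by_cases h0 : (j : ℕ) = 0 <;> by_cases h1 : (j : ℕ) = 1 <;>
          simp [hG, h0, h1] <;> ring
    set g : Cn n →ₗ[ℂ] Cn n := Glin.mk' G with hg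
    have hgapp : ∀ x, g x = G x := fun _ => rfl
    have hginj : Function.Injective g := by
      intro x y hxy
      funext k
      have hk := congrFun hxy k
      rw [hgapp, hgapp, hG] at hk
      by_cases h0 : (k : ℕ) = 0
      · have : k = i0 := by apply Fin.ext; simpa using h0
        rw [this]
        have := congrFun hxy i0
        rw [hgapp, hgapp, hG] at this
        simpa [hi0] using this
      · have h1eq : x i1 = y i1 := by
          have h' : A / c * x i1 = A / c * y i1 := by
            have := congrFun hxy i1
            rw [hgapp, hgapp, hG] at this
            simpa [hi1] using this
          exact mul_left_cancel₀ (div_ne_zero hA hc) h'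
        by_cases h1 : (k : ℕ) = 1
        · have : k = i1 := by apply Fin.ext; simpa using h1
          rw [this]; exact h1eq
        · simp [h0, h1, h1eq] at hk
          linear_combination hk
    refine exists_conj _ _ _ _ g hginj ?_ ?_
    · intro x
      rw [hβ₁]
      funext j
      simp only [hgapp, hG]
      by_cases h0 : (j : ℕ) = 0
      · have hj : j = i0 := by apply Fin.ext; simpa using h0
        simp [hj, hi0, hi1]
      · by_cases h1 : (j : ℕ) = 1
        · have hj : j = i1 := by apply Fin.ext; simpa using h1
          simp [hj, hi0, hi1]
          field_simp
          ring
        · have hj0 : j ≠ i0 := fun h => h0 (by rw [h])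
          have hj1 : j ≠ i1 := fun h => h1 (by rw [h])
          simp [h0, h1, hj0, hj1, hi0, hi1, Fin.ext_iff]
          field_simp
          ring
    · intro x
      rw [hβ₂]
      funext j
      simp only [hgapp, hG]
      by_cases h0 : (j : ℕ) = 0
      · have hj : j = i0 := by apply Fin.ext; simpa using h0
        have : A * a₂ i0 = c := heq
        simp [hj, hi0, hi1]
        field_simp
        linear_combination x i1 * this
      · by_cases h1 : (j : ℕ) = 1
        · have hj : j = i1 := by apply Fin.ext; simpa using h1
          simp [hj, hi0, hi1]
          ring
        · have hj0 : j ≠ i0 := fun h => h0 (by rw [h])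
          have hj1 : j ≠ i1 := fun h => h1 (by rw [h])
          have h2j : 2 ≤ (j : ℕ) := by omega
          have hcj : a₂ j = a₂ i0 / (lam₁ - 1) * a₁ j := hcase j h2j
          have key : a₂ j * A = (lam₂ - 1) * a₁ j := by
            rw [hcj]
            field_simp
            linear_combination a₁ j * heq
          simp [h0, h1, hj0, hj1, hi0, hi1, Fin.ext_iff]
          field_simp
          linear_combination x i1 * key
  · -- case 2
    intro hcase
    push_neg at hcase
    obtain ⟨j₀, hj₀2, hj₀ne⟩ := hcase
    set d : Fin n → ℂ := fun j => A * a₂ j - (lam₂ - 1) * a₁ j with hd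
    have hd0 : d j₀ ≠ 0 := by
      intro h
      apply hj₀ne
      rw [hd] at h
      have hAA : A * a₂ j₀ = (lam₂ - 1) * a₁ j₀ := by linear_combination h
      have h2 : a₂ j₀ * (lam₁ - 1) * A = a₂ i0 * a₁ j₀ * A := by
        linear_combination (lam₁ - 1) * hAA - a₁ j₀ * heq
      have h3 := mul_right_cancel₀ hA h2
      field_simp
      linear_combination h3
    set τ : Equiv.Perm (Fin n) := Equiv.swap i2 j₀ with hτ
    set G : Cn n → Cn n := fun x j =>
      if (j : ℕ) = 0 then x i0
      else if (j : ℕ) = 1 then A / c * x i1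
      else a₁ j / c * x i1 + d j / c * x i2 +
        (if 3 ≤ ((τ j : Fin n) : ℕ) then x (τ j) else 0) with hG
    have Glin : IsLinearMap ℂ G := by
      constructor
      · intro x y; funext j
        by_cases h0 : (j : ℕ) = 0 <;> by_cases h1 : (j : ℕ) = 1 <;>
          by_cases h3 : 3 ≤ ((τ j : Fin n) : ℕ) <;>
          simp [hG, h0, h1, h3] <;> ring
      · intro t x; funext j
        by_cases h0 : (j : ℕ) = 0 <;> by_cases h1 : (j : ℕ) = 1 <;>
          by_cases h3 : 3 ≤ ((τ j : Fin n) : ℕ) <;>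
          simp [hG, h0, h1, h3] <;> ring
    set g : Cn n →ₗ[ℂ] Cn n := Glin.mk' G with hg
    have hgapp : ∀ x, g x = G x := fun _ => rfl
    have hτi2 : τ i2 = j₀ := Equiv.swap_apply_left _ _
    have hτj₀ : τ j₀ = i2 := Equiv.swap_apply_right _ _
    have hginj : Function.Injective g := by
      intro x y hxy
      have hx0 : x i0 = y i0 := by
        have := congrFun hxy i0
        rw [hgapp, hgapp, hG] at this
        simpa [hi0] using this
      have hx1 : x i1 = y i1 := by
        have h' : A / c * x i1 = A / c * y i1 := by
          have := congrFun hxy i1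
          rw [hgapp, hgapp, hG] at this
          simpa [hi1] using this
        exact mul_left_cancel₀ (div_ne_zero hA hc) h'
      have hx2 : x i2 = y i2 := by
        have hj := congrFun hxy j₀
        rw [hgapp, hgapp, hG] at hj
        have hj0 : ¬ ((j₀ : ℕ) = 0) := by omega
        have hj1 : ¬ ((j₀ : ℕ) = 1) := by omega
        have h3 : ¬ (3 ≤ ((τ j₀ : Fin n) : ℕ)) := by rw [hτj₀]; simp [hi2]
        simp only [hj0, hj1, h3, hx1, if_false, if_neg, ite_false] at hj
        have h' : d j₀ / c * x i2 = d j₀ / c * y i2 := by linear_combination hj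
        exact mul_left_cancel₀ (div_ne_zero hd0 hc) h'
      funext k
      by_cases hk0 : (k : ℕ) = 0
      · have : k = i0 := by apply Fin.ext; simpa using hk0
        rw [this]; exact hx0
      by_cases hk1 : (k : ℕ) = 1
      · have : k = i1 := by apply Fin.ext; simpa using hk1
        rw [this]; exact hx1
      by_cases hk2 : (k : ℕ) = 2
      · have : k = i2 := by apply Fin.ext; simpa using hk2
        rw [this]; exact hx2
      · -- k ≥ 3
        have hk3 : 3 ≤ (k : ℕ) := by omega
        have hτk : τ (τ k) = k := Equiv.swap_apply_self _ _ _
        have hτkv : 2 ≤ ((τ k : Fin n) : ℕ) := by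
          by_cases h : k = i2
          · exact absurd (by rw [h, hi2]) hk2
          by_cases h' : k = j₀
          · rw [h', hτj₀, hi2]
          · rw [hτ, Equiv.swap_apply_of_ne_of_ne h h']
            omega
        have hj := congrFun hxy (τ k)
        rw [hgapp, hgapp, hG] at hj
        have hj0 : ¬ (((τ k : Fin n) : ℕ) = 0) := by omega
        have hj1 : ¬ (((τ k : Fin n) : ℕ) = 1) := by omega
        have h3 : 3 ≤ ((τ (τ k) : Fin n) : ℕ) := by rw [hτk]; omega
        simp only [hτk] at hj
        simp only [hj0, hj1, hk3, hx1, hx2, if_true, if_false, ite_true, ite_false,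
          eq_self_iff_true, not_false_iff] at hj
        linear_combination hj
    refine exists_conj _ _ _ _ g hginj ?_ ?_
    · intro x
      rw [hβ₁]
      funext j
      simp only [hgapp, hG]
      by_cases h0 : (j : ℕ) = 0
      · have hj : j = i0 := by apply Fin.ext; simpa using h0
        simp [hj, hi0, hi1]
      · by_cases h1 : (j : ℕ) = 1
        · have hj : j = i1 := by apply Fin.ext; simpa using h1
          simp [hj, hi0, hi1]
          field_simp
          ring
        · have hj0 : j ≠ i0 := fun h => h0 (by rw [h])
          have hj1 : j ≠ i1 := fun h => h1 (by rw [h])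
          have htail : (if 3 ≤ ((τ j : Fin n) : ℕ) then
              (fun m : Fin n => if m = i0 then lam₁ * x i0
                else if m = i1 then c * x i0 + x i1 else x m) (τ j) else 0) =
              (if 3 ≤ ((τ j : Fin n) : ℕ) then x (τ j) else 0) := by
            by_cases h3 : 3 ≤ ((τ j : Fin n) : ℕ)
            · have n0 : τ j ≠ i0 := by intro h; rw [h, hi0] at h3; simp at h3
              have n1 : τ j ≠ i1 := by intro h; rw [h, hi1] at h3; simp at h3
              simp [h3, n0, n1]
            · simp [h3]
          have hi2ne0 : i2 ≠ i0 := by rw [hi2, hi0]; simp [Fin.ext_iff]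
          have hi2ne1 : i2 ≠ i1 := by rw [hi2, hi1]; simp [Fin.ext_iff]
          simp only [h0, h1, if_false, hj0, hj1, if_neg hj0, if_neg hj1,
            if_neg hi2ne0, if_neg hi2ne1, if_neg (show ¬ i1 = i0 from by
              rw [hi1, hi0]; simp [Fin.ext_iff]), if_pos rfl]
          rw [htail]
          simp only [show ((i0 : Fin n) : ℕ) = 0 from rfl, ↓reduceIte]
          field_simp
          ring
    · intro x
      rw [hβ₂]
      funext j
      simp only [hgapp, hG]
      by_cases h0 : (j : ℕ) = 0
      · have hj : j = i0 := by apply Fin.ext; simpa using h0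
        have hkey : A * a₂ i0 = c := heq
        simp [hj, hi0, hi1]
        field_simp
        linear_combination x i1 * hkey
      · by_cases h1 : (j : ℕ) = 1
        · have hj : j = i1 := by apply Fin.ext; simpa using h1
          simp [hj, hi0, hi1]
          ring
        · have hj0 : j ≠ i0 := fun h => h0 (by rw [h])
          have hj1 : j ≠ i1 := fun h => h1 (by rw [h])
          have htail : (if 3 ≤ ((τ j : Fin n) : ℕ) then
              (fun m : Fin n => if m = i0 then x i0 + x i1
                else if m = i1 then lam₂ * x i1
                else if m = i2 then x i1 + x i2 else x m) (τ j) else 0) =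
              (if 3 ≤ ((τ j : Fin n) : ℕ) then x (τ j) else 0) := by
            by_cases h3 : 3 ≤ ((τ j : Fin n) : ℕ)
            · have n0 : τ j ≠ i0 := by intro h; rw [h, hi0] at h3; simp at h3
              have n1 : τ j ≠ i1 := by intro h; rw [h, hi1] at h3; simp at h3
              have n2 : τ j ≠ i2 := by intro h; rw [h, hi2] at h3; simp at h3
              simp [h3, n0, n1, n2]
            · simp [h3]
          have hi2ne0 : i2 ≠ i0 := by rw [hi2, hi0]; simp [Fin.ext_iff]
          have hi2ne1 : i2 ≠ i1 := by rw [hi2, hi1]; simp [Fin.ext_iff]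
          have hi1ne0 : i1 ≠ i0 := by rw [hi1, hi0]; simp [Fin.ext_iff]
          have hkey : A * a₂ j = (lam₂ - 1) * a₁ j + d j := by rw [hd]; ring
          simp only [h0, h1, if_false, hj0, hj1, if_neg hj0, if_neg hj1,
            if_neg hi2ne0, if_neg hi2ne1, if_neg hi1ne0, if_pos rfl]
          rw [htail]
          simp only [show ((i1 : Fin n) : ℕ) = 1 from rfl, one_ne_zero,
            show ¬ i1 = i2 from fun h => by simp [hi1, hi2, Fin.ext_iff] at h, ↓reduceIte]
          field_simp
          linear_combination x i1 * (lam₁-1) * (lam₂-1) * hkey
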